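/- Let f be a real analytic function on a neighborhood of 0 in ℝ² and let x(t), t ∈ [0, ∞), be a trajectory of ∇f (dx/dt = ∇f(x(t))) with x(t) → 0 as t → ∞ and x(t) ≠ 0 for all t. Then x(t) does not spiral around the origin: there exists a continuous function θ : [0, ∞) → ℝ with x(t) = |x(t)|·(cos θ(t), sin θ(t)) for all t, and θ is bounded on [0, ∞). -/

import Mathlib

set_option maxHeartbeats 1600000
set_option linter.unusedVariables false
set_option linter.unreachableTactic false
set_option linter.unusedTactic false

open Filter Topology Real Set MeasureTheory intervalIntegral Complex NNReal ENNReal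

noncomputable section

namespace NoSpiral


lemma tail_bound (a : ℕ → ℝ) (ρ : ℝ) (hρ : 0 < ρ)
    (hsum : Summable fun j => |a j| * ρ ^ j) (n : ℕ) :
    ∃ C, 0 ≤ C ∧ ∀ r, 0 < r → r ≤ ρ →
      |(∑' j, a j * r ^ j) - ∑ j ∈ Finset.range n, a j * r ^ j| ≤ C * r ^ n := by
  have h1 : Summable fun k => |a (k + n)| * ρ ^ (k + n) :=
    (_root_.summable_nat_add_iff n).mpr hsum
  have h1' : Summable fun k => (|a (k + n)| * ρ ^ k) * ρ ^ n := by
    refine h1.congr fun k => ?_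
    rw [pow_add]; ring
  have h2 : Summable fun k => |a (k + n)| * ρ ^ k :=
    (summable_mul_right_iff (pow_ne_zero n hρ.ne')).mp h1'
  refine ⟨∑' k, |a (k + n)| * ρ ^ k, tsum_nonneg fun k => by positivity, ?_⟩
  intro r hr hrρ
  have habs : Summable fun j => |a j * r ^ j| := by
    refine Summable.of_nonneg_of_le (fun j => abs_nonneg _) (fun j => ?_) hsum
    rw [abs_mul, _root_.abs_pow, abs_of_pos hr]
    exact mul_le_mul_of_nonneg_left (pow_le_pow_left₀ hr.le hrρ j) (abs_nonneg _)
  have hsr : Summable fun j => a j * r ^ j := summable_abs_iff.mp habs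
  have hsplit := Summable.sum_add_tsum_nat_add n hsr
  have heq : (∑' j, a j * r ^ j) - ∑ j ∈ Finset.range n, a j * r ^ j
      = ∑' k, a (k + n) * r ^ (k + n) := by
    rw [← hsplit]; ring
  rw [heq]
  have habs' : Summable fun k => |a (k + n) * r ^ (k + n)| := (_root_.summable_nat_add_iff n).mpr habs
  calc |∑' k, a (k + n) * r ^ (k + n)| ≤ ∑' k, |a (k + n) * r ^ (k + n)| := by
        have := norm_tsum_le_tsum_norm (f := fun k => a (k + n) * r ^ (k + n)) ?_
        · simpa only [Real.norm_eq_abs] using this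
        · simpa only [Real.norm_eq_abs] using habs'
    _ = ∑' k, (|a (k + n)| * r ^ k) * r ^ n := by
        refine tsum_congr fun k => ?_
        rw [abs_mul, _root_.abs_pow, abs_of_pos hr, pow_add]; ring
    _ = (∑' k, |a (k + n)| * r ^ k) * r ^ n := by rw [_root_.tsum_mul_right]
    _ ≤ (∑' k, |a (k + n)| * ρ ^ k) * r ^ n := by
        refine mul_le_mul_of_nonneg_right ?_ (by positivity)
        refine Summable.tsum_le_tsum (fun k => ?_) ?_ h2
        · exact mul_le_mul_of_nonneg_left (pow_le_pow_left₀ hr.le hrρ k) (abs_nonneg _)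
        · refine Summable.of_nonneg_of_le (fun k => by positivity) (fun k => ?_) h2
          exact mul_le_mul_of_nonneg_left (pow_le_pow_left₀ hr.le hrρ k) (abs_nonneg _)

lemma first_coeff_nonneg (a : ℕ → ℝ) (ρ : ℝ) (hρ : 0 < ρ)
    (hsum : Summable fun j => |a j| * ρ ^ j) (n : ℕ) (h0 : ∀ j < n, a j = 0)
    (hpos : ∀ δ, 0 < δ → ∃ r, 0 < r ∧ r < δ ∧ 0 ≤ ∑' j, a j * r ^ j) :
    0 ≤ a n := by
  by_contra hneg
  push_neg at hneg
  obtain ⟨C, hC0, hC⟩ := tail_bound a ρ hρ hsum (n + 1)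
  have hδ2pos : 0 < (-a n) / (2 * (C + 1)) := div_pos (by linarith) (by positivity)
  set δ := min ρ ((-a n) / (2 * (C + 1))) with hδ
  have hδpos : 0 < δ := lt_min hρ hδ2pos
  obtain ⟨r, hr0, hrδ, hge⟩ := hpos δ hδpos
  have hrρ : r ≤ ρ := le_of_lt (lt_of_lt_of_le hrδ (min_le_left _ _))
  have hpartial : ∑ j ∈ Finset.range (n + 1), a j * r ^ j = a n * r ^ n := by
    rw [Finset.sum_range_succ]
    have : ∑ j ∈ Finset.range n, a j * r ^ j = 0 :=
      Finset.sum_eq_zero fun j hj => by rw [h0 j (Finset.mem_range.mp hj), zero_mul]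
    rw [this, zero_add]
  have hbd := hC r hr0 hrρ
  rw [hpartial] at hbd
  have hub : (∑' j, a j * r ^ j) ≤ a n * r ^ n + (C + 1) * r ^ (n + 1) := by
    have := (abs_le.mp hbd).2
    nlinarith [pow_pos hr0 (n + 1)]
  have hrsmall : r < (-a n) / (2 * (C + 1)) := lt_of_lt_of_le hrδ (min_le_right _ _)
  have hr2 : (C + 1) * r < (-a n) / 2 := by
    rw [lt_div_iff₀ (by positivity : (0:ℝ) < 2 * (C + 1))] at hrsmall
    nlinarith
  have : a n * r ^ n + (C + 1) * r ^ (n + 1) < 0 := by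
    have hpow : (0:ℝ) < r ^ n := pow_pos hr0 n
    have hexp : (C + 1) * r ^ (n + 1) = ((C + 1) * r) * r ^ n := by ring
    nlinarith
  linarith

lemma coeffs_zero (a : ℕ → ℝ) (ρ : ℝ) (hρ : 0 < ρ)
    (hsum : Summable fun j => |a j| * ρ ^ j)
    (hzero : ∀ r, 0 < r → r < ρ → (∑' j, a j * r ^ j) = 0) : ∀ n, a n = 0 := by
  intro n
  induction n using Nat.strong_induction_on with
  | _ n ih =>
    have key : ∀ δ, 0 < δ → ∃ r, 0 < r ∧ r < δ ∧ (∑' j, a j * r ^ j) = 0 := by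
      intro δ hδ
      refine ⟨min (δ/2) (ρ/2), lt_min (by linarith) (by linarith),
        lt_of_le_of_lt (min_le_left _ _) (by linarith), ?_⟩
      exact hzero _ (lt_min (by linarith) (by linarith))
        (lt_of_le_of_lt (min_le_right _ _) (by linarith))
    have h1 : 0 ≤ a n := by
      refine first_coeff_nonneg a ρ hρ hsum n ih fun δ hδ => ?_
      obtain ⟨r, h1, h2, h3⟩ := key δ hδ
      exact ⟨r, h1, h2, le_of_eq h3.symm⟩
    have h2 : 0 ≤ -a n := by
      have hsum' : Summable fun j => |(-a ·) j| * ρ ^ j := by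
        simpa only [abs_neg] using hsum
      refine first_coeff_nonneg (fun j => -a j) ρ hρ (by simpa only [abs_neg] using hsum) n
        (fun j hj => by show -a j = 0; rw [ih j hj, neg_zero]) fun δ hδ => ?_
      obtain ⟨r, hr1, hr2, hr3⟩ := key δ hδ
      refine ⟨r, hr1, hr2, ?_⟩
      have : ∑' j, (fun j => -a j) j * r ^ j = -∑' j, a j * r ^ j := by
        rw [← tsum_neg]
        exact tsum_congr fun j => by ring
      rw [this, hr3, neg_zero]
    linarith



lemma ftc_cont {φ : ℝ → ℂ} (hφ : Continuous φ) (t : ℝ) :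
    HasDerivAt (fun u => ∫ s in (0:ℝ)..u, φ s) (φ t) t :=
  intervalIntegral.integral_hasDerivAt_right (hφ.intervalIntegrable _ _)
    (hφ.stronglyMeasurableAtFilter _ _) hφ.continuousAt

lemma const_of_deriv_zero {E : Type*} [NormedAddCommGroup E] [NormedSpace ℝ E]
    {F : ℝ → E} {a b : ℝ} (hab : a ≤ b)
    (h : ∀ t, a ≤ t → t ≤ b → HasDerivAt F 0 t) : F b = F a :=
  constant_of_has_deriv_right_zero
    (fun t ht => (h t ht.1 ht.2).continuousAt.continuousWithinAt)
    (fun t ht => (h t ht.1 ht.2.le).hasDerivWithinAt)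
    b ⟨hab, le_refl b⟩

lemma deriv_nonneg_left {θ : ℝ → ℝ} {d t₀ : ℝ} (hd : HasDerivAt θ d t₀) (ht₀ : 0 < t₀)
    (hle : ∀ t, 0 ≤ t → t < t₀ → θ t ≤ θ t₀) : 0 ≤ d := by
  have h1 : Tendsto (slope θ t₀) (𝓝[<] t₀) (𝓝 d) := by
    refine (hasDerivAt_iff_tendsto_slope.mp hd).mono_left
      (nhdsWithin_mono _ fun t ht => ?_)
    exact ne_of_lt ht
  refine ge_of_tendsto h1 ?_
  filter_upwards [Ioo_mem_nhdsLT_of_mem (⟨ht₀, le_refl t₀⟩ : t₀ ∈ Ioc 0 t₀)] with t ht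
  have h2 : θ t ≤ θ t₀ := hle t ht.1.le ht.2
  have h3 : t - t₀ < 0 := by linarith [ht.2]
  rw [slope_def_field]
  exact div_nonneg_of_nonpos (by linarith) h3.le

/-- First-hitting lemma: if `θ` is differentiable on `[0,∞)` with derivative `q` and
unbounded above there, then for every base angle `α` and tail property `P`
there is a hitting time `t` with `θ t = α + 2πk`, `P t` and `q t ≥ 0`. -/
lemma hit {θ q : ℝ → ℝ} (hθd : ∀ t, 0 ≤ t → HasDerivAt θ (q t) t)
    (hub : ¬BddAbove (θ '' Set.Ici 0)) {P : ℝ → Prop} {T : ℝ} (hT : 0 ≤ T)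
    (hP : ∀ t, T ≤ t → P t) (α : ℝ) :
    ∃ t k, 0 < t ∧ P t ∧ θ t = α + 2*π*(k:ℕ) ∧ 0 ≤ q t := by
  have hθc : ContinuousOn θ (Set.Ici 0) :=
    fun t ht => (hθd t ht).continuousAt.continuousWithinAt
  obtain ⟨B, hB⟩ := (isCompact_Icc : IsCompact (Icc (0:ℝ) T)).exists_bound_of_continuousOn
    (hθc.mono fun t ht => ht.1)
  obtain ⟨k, hk⟩ := exists_nat_gt ((B - α) / (2*π))
  set L := α + 2*π*(k:ℕ) with hL
  have hBL : B < L := by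
    rw [div_lt_iff₀ (by positivity : (0:ℝ) < 2*π)] at hk
    rw [hL]; nlinarith
  have hθT : ∀ t, t ∈ Icc (0:ℝ) T → θ t < L := by
    intro t ht
    have := hB t ht
    rw [Real.norm_eq_abs] at this
    have := (abs_le.mp this).2
    linarith
  obtain ⟨y, ⟨t₁, ht₁0, rfl⟩, ht₁⟩ : ∃ y ∈ θ '' Set.Ici 0, L < y := by
    rw [not_bddAbove_iff] at hub
    exact hub L
  have ht₁0' : (0:ℝ) ≤ t₁ := ht₁0
  have hIcc : ContinuousOn θ (Icc 0 t₁) := hθc.mono fun t ht => ht.1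
  have hmem : L ∈ Icc (θ 0) (θ t₁) :=
    ⟨(hθT 0 ⟨le_refl 0, hT⟩).le, ht₁.le⟩
  obtain ⟨s₀, hs₀, hθs₀⟩ := intermediate_value_Icc ht₁0' hIcc hmem
  set S := Icc (0:ℝ) t₁ ∩ θ ⁻¹' {L} with hS
  have hSne : S.Nonempty := ⟨s₀, hs₀, hθs₀⟩
  have hScl : IsClosed S :=
    hIcc.preimage_isClosed_of_isClosed isClosed_Icc isClosed_singleton
  have hSbd : BddBelow S := ⟨0, fun t ht => ht.1.1⟩
  set ts := sInf S with hts
  have htsS : ts ∈ S := hScl.csInf_mem hSne hSbd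
  have htsθ : θ ts = L := htsS.2
  have htsmin : ∀ t ∈ S, ts ≤ t := fun t ht => csInf_le hSbd ht
  have htsT : T < ts := by
    by_contra h
    push_neg at h
    exact absurd htsθ (ne_of_lt (hθT ts ⟨htsS.1.1, h⟩))
  have htspos : 0 < ts := lt_of_le_of_lt hT htsT
  have hlt : ∀ t, 0 ≤ t → t < ts → θ t ≤ θ ts := by
    intro t ht htlt
    rw [htsθ]
    by_contra h
    push_neg at h
    have htt₁ : t ≤ t₁ := le_trans htlt.le htsS.1.2
    have : L ∈ Icc (θ 0) (θ t) := ⟨(hθT 0 ⟨le_refl 0, hT⟩).le, h.le⟩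
    obtain ⟨s₁, hs₁, hθs₁⟩ := intermediate_value_Icc ht (hIcc.mono (Icc_subset_Icc_right htt₁)) this
    have : ts ≤ s₁ := htsmin s₁ ⟨⟨hs₁.1, le_trans hs₁.2 htt₁⟩, hθs₁⟩
    linarith [hs₁.2]
  refine ⟨ts, k, htspos, hP ts htsT.le, htsθ, ?_⟩
  exact deriv_nonneg_left (hθd ts htspos.le) htspos hlt



abbrev E2 := EuclideanSpace ℝ (Fin 2)

def Phi : ℂ ≃ₗᵢ[ℝ] E2 :=
  Complex.isometryOfOrthonormal (EuclideanSpace.basisFun (Fin 2) ℝ)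

lemma Phi_symm_apply (v : E2) : Phi.symm v = (v 0 : ℂ) + (v 1 : ℂ) * Complex.I := by
  rw [Phi, Complex.isometryOfOrthonormal_symm_apply]
  congr 1 <;> norm_cast <;>
    simp [OrthonormalBasis.coe_toBasis, Basis.coord_apply, EuclideanSpace.basisFun_toBasis]

lemma Phi_apply (ζ : ℂ) :
    Phi ζ = ζ.re • EuclideanSpace.single (0 : Fin 2) (1:ℝ)
      + ζ.im • EuclideanSpace.single (1 : Fin 2) (1:ℝ) := by
  rw [Phi, Complex.isometryOfOrthonormal_apply]
  simp [EuclideanSpace.basisFun_apply]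

lemma Phi_coord0 (ζ : ℂ) : Phi ζ 0 = ζ.re := by
  have h := Phi_symm_apply (Phi ζ)
  rw [Phi.symm_apply_apply] at h
  have := congrArg Complex.re h
  simpa using this.symm

lemma Phi_coord1 (ζ : ℂ) : Phi ζ 1 = ζ.im := by
  have h := Phi_symm_apply (Phi ζ)
  rw [Phi.symm_apply_apply] at h
  have := congrArg Complex.im h
  simpa using this.symm

def PhiCLM : ℂ →L[ℝ] E2 := (Phi.toContinuousLinearEquiv : ℂ ≃L[ℝ] E2)

lemma PhiCLM_apply (ζ : ℂ) : PhiCLM ζ = Phi ζ := rfl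

def PhiSymmCLM : E2 →L[ℝ] ℂ := (Phi.symm.toContinuousLinearEquiv : E2 ≃L[ℝ] ℂ)

lemma PhiSymmCLM_apply (v : E2) : PhiSymmCLM v = Phi.symm v := rfl

variable {U : Set E2} {f : E2 → ℝ}

/-- complex representation of the gradient of `f` -/
def gmap (f : E2 → ℝ) (ζ : ℂ) : ℂ :=
  (fderiv ℝ f (Phi ζ) (EuclideanSpace.single (0 : Fin 2) (1:ℝ)) : ℂ)
    + (fderiv ℝ f (Phi ζ) (EuclideanSpace.single (1 : Fin 2) (1:ℝ)) : ℂ) * Complex.I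

/-- the "angular derivative" function -/
def Gf (f : E2 → ℝ) (ζ : ℂ) : ℝ := ((starRingEnd ℂ) ζ * gmap f ζ).im

lemma grad_transfer {p : E2} (hd : DifferentiableAt ℝ f p) :
    Phi.symm (gradient f p) = gmap f (Phi.symm p) := by
  have h1 : fderiv ℝ f p = InnerProductSpace.toDual ℝ E2 (gradient f p) := by
    have := (hd.hasGradientAt).hasFDerivAt
    exact this.fderiv
  have h2 : ∀ i : Fin 2, fderiv ℝ f p (EuclideanSpace.single i (1:ℝ)) = gradient f p i := by
    intro i
    rw [h1]
    rw [InnerProductSpace.toDual_apply_apply]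
    rw [EuclideanSpace.inner_single_right]
    simp
  rw [Phi_symm_apply, gmap, Phi.apply_symm_apply, h2 0, h2 1]

lemma Gf_as_dir (ζ : ℂ) : Gf f ζ = fderiv ℝ f (Phi ζ) (Phi (ζ * Complex.I)) := by
  rw [Phi_apply (ζ * Complex.I), map_add, _root_.map_smul, _root_.map_smul]
  rw [Gf, gmap]
  set c := fderiv ℝ f (Phi ζ) (EuclideanSpace.single (0 : Fin 2) (1:ℝ))
  set d := fderiv ℝ f (Phi ζ) (EuclideanSpace.single (1 : Fin 2) (1:ℝ))
  simp only [Complex.mul_I_re, Complex.mul_I_im, smul_eq_mul]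
  simp [Complex.mul_im]
  ring

lemma gmap_analyticAt [CompleteSpace E2] (hf : AnalyticOnNhd ℝ f U) (hU : IsOpen U)
    {ζ : ℂ} (hζ : Phi ζ ∈ U) : AnalyticAt ℝ (gmap f) ζ := by
  have hD := hf.fderiv (𝕜 := ℝ)
  have hPhiA : AnalyticAt ℝ (fun w : ℂ => Phi w) ζ := by
    have := PhiCLM.analyticAt ζ
    exact this.congr (by filter_upwards with w; rw [PhiCLM_apply])
  have hcomp : AnalyticAt ℝ (fun w : ℂ => fderiv ℝ f (Phi w)) ζ := by
    have h1 : AnalyticAt ℝ (fderiv ℝ f) (Phi ζ) := hD _ hζ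
    exact h1.comp hPhiA
  have h0 : AnalyticAt ℝ (fun w : ℂ => fderiv ℝ f (Phi w) (EuclideanSpace.single (0:Fin 2) (1:ℝ))) ζ := by
    exact ((ContinuousLinearMap.apply ℝ ℝ (EuclideanSpace.single (0:Fin 2) (1:ℝ))).analyticAt _).comp hcomp
  have h1 : AnalyticAt ℝ (fun w : ℂ => fderiv ℝ f (Phi w) (EuclideanSpace.single (1:Fin 2) (1:ℝ))) ζ := by
    exact ((ContinuousLinearMap.apply ℝ ℝ (EuclideanSpace.single (1:Fin 2) (1:ℝ))).analyticAt _).comp hcomp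
  have h0' : AnalyticAt ℝ (fun w : ℂ => ((fderiv ℝ f (Phi w) (EuclideanSpace.single (0:Fin 2) (1:ℝ)) : ℝ) : ℂ)) ζ :=
    (Complex.ofRealCLM.analyticAt _).comp h0
  have h1' : AnalyticAt ℝ (fun w : ℂ => ((fderiv ℝ f (Phi w) (EuclideanSpace.single (1:Fin 2) (1:ℝ)) : ℝ) : ℂ)) ζ :=
    (Complex.ofRealCLM.analyticAt _).comp h1
  exact h0'.add (h1'.mul analyticAt_const)

lemma Gf_analyticAt (hf : AnalyticOnNhd ℝ f U) (hU : IsOpen U)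
    {ζ : ℂ} (hζ : Phi ζ ∈ U) : AnalyticAt ℝ (Gf f) ζ := by
  have hconj : AnalyticAt ℝ (fun w : ℂ => (starRingEnd ℂ) w) ζ := by
    have := ((Complex.conjCLE : ℂ ≃L[ℝ] ℂ) : ℂ →L[ℝ] ℂ).analyticAt ζ
    exact this.congr (by filter_upwards with w; simp)
  have hmul : AnalyticAt ℝ (fun w : ℂ => (starRingEnd ℂ) w * gmap f w) ζ :=
    hconj.mul (gmap_analyticAt hf hU hζ)
  exact (Complex.imCLM.analyticAt _).comp hmul

lemma exactness (hU : IsOpen U) (hf : AnalyticOnNhd ℝ f U) {ε : ℝ}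
    (hε : ∀ ζ : ℂ, ‖ζ‖ < ε → Phi ζ ∈ U) {r : ℝ} (hr0 : 0 < r) (hrε : r < ε) :
    ∫ α in (0:ℝ)..(2*π), Gf f ((r:ℂ) * Complex.exp ((α:ℂ) * Complex.I)) = 0 := by
  set γ : ℝ → ℂ := fun α => (r:ℂ) * Complex.exp ((α:ℂ) * Complex.I) with hγ
  have hγnorm : ∀ α : ℝ, ‖γ α‖ = r := by
    intro α
    rw [hγ]
    simp only [norm_mul, Complex.norm_exp_ofReal_mul_I, Complex.norm_real]
    rw [Real.norm_eq_abs, abs_of_pos hr0, mul_one]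
  have hγU : ∀ α : ℝ, Phi (γ α) ∈ U := fun α => hε _ (by rw [hγnorm]; exact hrε)
  have hγcont : Continuous γ :=
    continuous_const.mul (Complex.continuous_exp.comp (Complex.continuous_ofReal.mul continuous_const))
  have hd : ∀ α ∈ uIcc (0:ℝ) (2*π), HasDerivAt (fun β => f (Phi (γ β))) (Gf f (γ α)) α := by
    intro α _
    have h1 : HasDerivAt (fun β : ℝ => (β:ℂ) * Complex.I) Complex.I α := by
      have := (Complex.ofRealCLM.hasDerivAt (x := α)).mul_const Complex.I
      simpa using this
    have h2 : HasDerivAt (fun β : ℝ => Complex.exp ((β:ℂ) * Complex.I))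
        (Complex.exp ((α:ℂ) * Complex.I) * Complex.I) α := h1.cexp
    have hdz : HasDerivAt γ (γ α * Complex.I) α := by
      have := h2.const_mul (r:ℂ)
      simpa [hγ, mul_assoc] using this
    have hfd : HasFDerivAt f (fderiv ℝ f (Phi (γ α))) (Phi (γ α)) :=
      ((hf _ (hγU α)).differentiableAt).hasFDerivAt
    have hfP : HasFDerivAt (fun w : ℂ => f (Phi w))
        ((fderiv ℝ f (Phi (γ α))).comp PhiCLM) (γ α) := by
      have hP : HasFDerivAt (fun w : ℂ => Phi w) PhiCLM (γ α) := by
        have := PhiCLM.hasFDerivAt (x := γ α)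
        exact this.congr_of_eventuallyEq (by filter_upwards with w; rw [PhiCLM_apply])
      exact hfd.comp _ hP
    have := hfP.comp_hasDerivAt α hdz
    have e : Gf f (γ α) = ((fderiv ℝ f (Phi (γ α))).comp PhiCLM) (γ α * Complex.I) := by
      rw [ContinuousLinearMap.comp_apply, PhiCLM_apply, Gf_as_dir]
    rw [e]; exact this
  have hcont : ContinuousOn (fun α => Gf f (γ α)) (uIcc (0:ℝ) (2*π)) := by
    intro α _
    exact ((Gf_analyticAt hf hU (hγU α)).continuousAt.comp hγcont.continuousAt).continuousWithinAt
  have := intervalIntegral.integral_eq_sub_of_hasDerivAt hd (hcont.intervalIntegrable)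
  rw [this]
  have h2π : γ (2*π) = γ 0 := by
    have harg : ((2*π : ℝ):ℂ) * Complex.I = 2*(π:ℂ)*Complex.I := by push_cast; ring
    rw [hγ]
    simp only [harg, Complex.exp_two_pi_mul_I, Complex.ofReal_zero, zero_mul, Complex.exp_zero]
  rw [h2π, sub_self]


-- PART 4: series coefficients along rays, mean-zero lemma
lemma coeff_bound (P : FormalMultilinearSeries ℝ ℂ ℝ) (j : ℕ) {ω : ℂ} (hω : ‖ω‖ = 1) :
    |P j (fun _ => ω)| ≤ ‖P j‖ := by
  have := (P j).le_opNorm (fun _ => ω)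
  rw [Real.norm_eq_abs] at this
  calc |P j (fun _ => ω)| ≤ ‖P j‖ * ∏ _i : Fin j, ‖ω‖ := this
    _ = ‖P j‖ := by rw [hω]; simp

lemma coeff_hom (P : FormalMultilinearSeries ℝ ℂ ℝ) (j : ℕ) (s : ℝ) (ω : ℂ) :
    P j (fun _ => (s:ℂ) * ω) = s ^ j * P j (fun _ => ω) := by
  have h1 : (fun _ : Fin j => (s:ℂ) * ω) = fun _ : Fin j => s • ω := by
    funext i; rw [Complex.real_smul]
  rw [h1]
  have h2 := (P j).toMultilinearMap.map_smul_univ (fun _ : Fin j => s) (fun _ : Fin j => ω)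
  simp only [ContinuousMultilinearMap.coe_coe] at h2
  rw [h2]
  simp [smul_eq_mul]

lemma ray_sum {G : ℂ → ℝ} {P : FormalMultilinearSeries ℝ ℂ ℝ} {η : ℝ≥0}
    (hP : HasFPowerSeriesOnBall G P 0 η) {ω : ℂ} (hω : ‖ω‖ = 1)
    {r : ℝ} (hr0 : 0 < r) (hrη : r < (η:ℝ)) :
    (∑' j, (P j fun _ => ω) * r ^ j) = G ((r:ℂ) * ω) := by
  have hnorm : ‖(r:ℂ) * ω‖ = r := by
    rw [norm_mul, hω, mul_one, Complex.norm_real, Real.norm_eq_abs, abs_of_pos hr0]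
  have hmem : ((r:ℂ) * ω) ∈ Metric.eball (0:ℂ) (η:ℝ≥0∞) := by
    rw [Metric.mem_eball, edist_zero_right]
    have h1 : ‖(r:ℂ)*ω‖₊ < η := by
      rw [← NNReal.coe_lt_coe, coe_nnnorm, hnorm]; exact hrη
    exact_mod_cast ENNReal.coe_lt_coe.mpr h1
  have hs := hP.hasSum hmem
  rw [zero_add] at hs
  have heq : (fun j => P j fun _ => (r:ℂ)*ω) = fun j => (P j fun _ => ω) * r ^ j := by
    funext j; rw [coeff_hom]; ring
  rw [heq] at hs
  exact hs.tsum_eq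

lemma mean_coeffs_zero {U : Set E2} (hU : IsOpen U) {f : E2 → ℝ} (hf : AnalyticOnNhd ℝ f U)
    {P : FormalMultilinearSeries ℝ ℂ ℝ} {η : ℝ≥0} (hη : 0 < (η:ℝ))
    (hP : HasFPowerSeriesOnBall (Gf f) P 0 η) (hrad : (η:ℝ≥0∞) < P.radius)
    (hballU : ∀ ζ:ℂ, ‖ζ‖ < (η:ℝ) → Phi ζ ∈ U) :
    ∀ n, (∫ α in Ioc (0:ℝ) (2*π), P n (fun _ => Complex.exp ((α:ℂ)*Complex.I))) = 0 := by
  set gc : ℕ → ℝ → ℝ := fun n α => P n (fun _ => Complex.exp ((α:ℂ)*Complex.I)) with hgc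
  set c : ℕ → ℝ := fun n => ∫ α in Ioc (0:ℝ) (2*π), gc n α with hc
  have hωnorm : ∀ α : ℝ, ‖Complex.exp ((α:ℂ)*Complex.I)‖ = 1 := fun α =>
    Complex.norm_exp_ofReal_mul_I α
  have hPsum : Summable fun n => ‖P n‖ * (η:ℝ)^n := P.summable_norm_mul_pow hrad
  have hgccont : ∀ n, Continuous (gc n) := by
    intro n
    apply (P n).coe_continuous.comp
    exact continuous_pi fun i =>
      Complex.continuous_exp.comp (Complex.continuous_ofReal.mul continuous_const)
  have hgcbd : ∀ n α, |gc n α| ≤ ‖P n‖ := fun n α => coeff_bound P n (hωnorm α)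
  have hvol : volume (Ioc (0:ℝ) (2*π)) < ⊤ := measure_Ioc_lt_top
  have hvolR : (volume (Ioc (0:ℝ) (2*π))).toReal = 2*π := by
    rw [Real.volume_Ioc, ENNReal.toReal_ofReal (by linarith [Real.pi_pos] : (0:ℝ) ≤ 2*π - 0)]
    ring
  have hcbound : ∀ n, |c n| ≤ (2*π) * ‖P n‖ := by
    intro n
    rw [hc]
    have := MeasureTheory.norm_setIntegral_le_of_norm_le_const (μ := volume)
      (s := Ioc (0:ℝ) (2*π)) (f := gc n) (C := ‖P n‖) hvol
      (fun α _ => by rw [Real.norm_eq_abs]; exact hgcbd n α)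
    rw [Real.norm_eq_abs] at this
    calc |∫ α in Ioc (0:ℝ) (2*π), gc n α| ≤ ‖P n‖ * (volume (Ioc (0:ℝ) (2*π))).toReal := this
      _ = (2*π) * ‖P n‖ := by rw [hvolR]; ring
  have hPsum2 : Summable fun n => (2*π) * ‖P n‖ * (η:ℝ)^n :=
    (hPsum.mul_left (2*π)).congr fun n => by ring
  have hcsum : Summable fun n => |c n| * (η:ℝ)^n := by
    refine Summable.of_nonneg_of_le (fun n => by positivity) (fun n => ?_) hPsum2
    exact mul_le_mul_of_nonneg_right (hcbound n) (by positivity)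
  have hzero : ∀ r : ℝ, 0 < r → r < (η:ℝ) → (∑' n, c n * r ^ n) = 0 := by
    intro r hr0 hrη
    have hF_int : ∀ n, Integrable (fun α => gc n α * r ^ n)
        (volume.restrict (Ioc (0:ℝ) (2*π))) := by
      intro n
      exact (((hgccont n).mul continuous_const).integrableOn_Ioc)
    have hptbd : ∀ n, ∀ α ∈ Ioc (0:ℝ) (2*π), ‖gc n α * r ^ n‖ ≤ ‖P n‖ * r ^ n := by
      intro n α _
      rw [Real.norm_eq_abs, abs_mul, _root_.abs_pow, abs_of_pos hr0]
      exact mul_le_mul_of_nonneg_right (hgcbd n α) (by positivity)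
    have hF_sum : Summable fun n => ∫ α in Ioc (0:ℝ) (2*π), ‖gc n α * r ^ n‖ := by
      refine Summable.of_nonneg_of_le
        (fun n => integral_nonneg fun α => norm_nonneg _) (fun n => ?_)
        ((hPsum.mul_left (2*π)).congr fun n => by ring :
          Summable fun n => (2*π) * (‖P n‖ * (η:ℝ)^n))
      have hmono : (∫ α in Ioc (0:ℝ) (2*π), ‖gc n α * r ^ n‖)
          ≤ ∫ _α in Ioc (0:ℝ) (2*π), ‖P n‖ * r ^ n := by
        refine setIntegral_mono_on (hF_int n).norm (integrable_const _) measurableSet_Ioc ?_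
        exact hptbd n
      calc (∫ α in Ioc (0:ℝ) (2*π), ‖gc n α * r ^ n‖)
          ≤ ∫ _α in Ioc (0:ℝ) (2*π), ‖P n‖ * r ^ n := hmono
        _ = (2*π) * (‖P n‖ * r ^ n) := by
            rw [setIntegral_const, measureReal_def, hvolR, smul_eq_mul]
        _ ≤ (2*π) * (‖P n‖ * (η:ℝ) ^ n) := by
            have hrn : r ^ n ≤ (η:ℝ) ^ n := pow_le_pow_left₀ hr0.le hrη.le n
            have h1 : ‖P n‖ * r ^ n ≤ ‖P n‖ * (η:ℝ)^n :=
              mul_le_mul_of_nonneg_left hrn (norm_nonneg _)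
            have h2 : (0:ℝ) ≤ 2*π := by linarith [Real.pi_pos]
            exact mul_le_mul_of_nonneg_left h1 h2
    have hkey := MeasureTheory.integral_tsum_of_summable_integral_norm hF_int hF_sum
    have hlhs : (∑' n, ∫ α in Ioc (0:ℝ) (2*π), gc n α * r ^ n) = ∑' n, c n * r ^ n := by
      refine tsum_congr fun n => ?_
      rw [MeasureTheory.integral_mul_const]
    have hrhs : (∫ α in Ioc (0:ℝ) (2*π), ∑' n, gc n α * r ^ n) = 0 := by
      have hPt : ∀ α : ℝ, (∑' n, gc n α * r ^ n)
          = Gf f ((r:ℂ) * Complex.exp ((α:ℂ)*Complex.I)) := by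
        intro α
        exact ray_sum hP (hωnorm α) hr0 hrη
      rw [show (fun α : ℝ => ∑' n, gc n α * r ^ n)
          = fun α : ℝ => Gf f ((r:ℂ) * Complex.exp ((α:ℂ)*Complex.I)) from funext hPt]
      have := exactness hU hf hballU hr0 hrη
      rwa [intervalIntegral.integral_of_le (by positivity : (0:ℝ) ≤ 2*π)] at this
    rw [← hlhs, hkey, hrhs]
  intro n
  have := coeffs_zero c (η:ℝ) hη hcsum hzero n
  exact this

-- PART 4.5 : small complex helpers
lemma L_div_im (u v : ℂ) : (u / v).im = ((starRingEnd ℂ) v * u).im / Complex.normSq v := by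
  rw [Complex.div_im]
  simp only [Complex.mul_im, Complex.conj_re, Complex.conj_im]
  ring

lemma L_normsq (v : ℂ) : Complex.normSq v = ‖v‖^2 := by
  rw [← Complex.sq_norm]

lemma L_exp_per_add (α : ℝ) (k : ℕ) :
    Complex.exp (((α + 2*π*k : ℝ) : ℂ) * Complex.I) = Complex.exp ((α:ℂ) * Complex.I) := by
  have h : ((α + 2*π*k : ℝ) : ℂ) * Complex.I
      = (α:ℂ) * Complex.I + (k:ℂ) * (2*(π:ℂ)*Complex.I) := by push_cast; ring
  rw [h, Complex.exp_add, Complex.exp_nat_mul_two_pi_mul_I, mul_one]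

lemma L_exp_per_sub (α : ℝ) (k : ℕ) :
    Complex.exp (((α - 2*π*k : ℝ) : ℂ) * Complex.I) = Complex.exp ((α:ℂ) * Complex.I) := by
  have h : ((α - 2*π*k : ℝ) : ℂ) * Complex.I
      = (α:ℂ) * Complex.I + (-(k:ℤ) : ℂ) * (2*(π:ℂ)*Complex.I) := by push_cast; ring
  rw [h, Complex.exp_add]
  rw [show ((-(k:ℤ) : ℂ)) = ((-(k:ℤ) : ℤ) : ℂ) by push_cast; ring]
  rw [Complex.exp_int_mul_two_pi_mul_I, mul_one]

lemma L_unit_exp (ω : ℂ) (hω : ‖ω‖ = 1) :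
    ∃ α : ℝ, 0 ≤ α ∧ α ≤ 2*π ∧ ω = Complex.exp ((α:ℂ) * Complex.I) := by
  have habs : (‖ω‖ : ℂ) * Complex.exp ((Complex.arg ω : ℂ) * Complex.I) = ω :=
    Complex.norm_mul_exp_arg_mul_I ω
  rw [hω] at habs
  push_cast at habs
  rw [one_mul] at habs
  have hlo := Complex.neg_pi_lt_arg ω
  have hhi := Complex.arg_le_pi ω
  have hπ := Real.pi_pos
  rcases le_total 0 (Complex.arg ω) with h | h
  · exact ⟨Complex.arg ω, h, by linarith, habs.symm⟩
  · refine ⟨Complex.arg ω + 2*π, by linarith, by linarith, ?_⟩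
    rw [show ((Complex.arg ω + 2*π : ℝ) : ℂ) = ((Complex.arg ω + 2*π*(1:ℕ) : ℝ) : ℂ) by push_cast; ring]
    rw [L_exp_per_add]
    exact habs.symm

theorem main
    (U : Set (EuclideanSpace ℝ (Fin 2))) (hU : IsOpen U) (h0U : (0 : EuclideanSpace ℝ (Fin 2)) ∈ U)
    (f : EuclideanSpace ℝ (Fin 2) → ℝ) (hf : AnalyticOnNhd ℝ f U)
    (x : ℝ → EuclideanSpace ℝ (Fin 2))
    (hx : ∀ t : ℝ, 0 ≤ t → x t ∈ U ∧ HasDerivAt x (gradient f (x t)) t)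
    (hne : ∀ t : ℝ, 0 ≤ t → x t ≠ 0)
    (hlim : Tendsto x atTop (𝓝 0)) :
    ∃ θ : ℝ → ℝ, ContinuousOn θ (Set.Ici 0) ∧
      (∀ t : ℝ, 0 ≤ t →
        x t 0 = ‖x t‖ * Real.cos (θ t) ∧ x t 1 = ‖x t‖ * Real.sin (θ t)) ∧
      ∃ C : ℝ, ∀ t : ℝ, 0 ≤ t → |θ t| ≤ C := by
  classical
  have hXU : ∀ t, 0 ≤ t → x t ∈ U := fun t ht => (hx t ht).1
  have hxd : ∀ t, 0 ≤ t → HasDerivAt x (gradient f (x t)) t := fun t ht => (hx t ht).2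
  set z : ℝ → ℂ := fun t => Phi.symm (x t) with hzdef
  have hzx : ∀ t, Phi (z t) = x t := fun t => Phi.apply_symm_apply _
  have hznorm : ∀ t, ‖z t‖ = ‖x t‖ := fun t => Phi.symm.norm_map _
  have hzne : ∀ t, 0 ≤ t → z t ≠ 0 := by
    intro t ht h0
    apply hne t ht
    rw [← hzx t, h0, map_zero]
  have hdiffU : ∀ p ∈ U, DifferentiableAt ℝ f p := fun p hp => (hf p hp).differentiableAt
  -- derivative of z
  have hzd : ∀ t, 0 ≤ t → HasDerivAt z (gmap f (z t)) t := by
    intro t ht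
    have h2 := (PhiSymmCLM.hasFDerivAt).comp_hasDerivAt t (hxd t ht)
    have h3 : HasDerivAt z (PhiSymmCLM (gradient f (x t))) t := by
      refine h2.congr_of_eventuallyEq ?_
      filter_upwards with s
      simp only [Function.comp_apply, PhiSymmCLM_apply, hzdef]
    rw [PhiSymmCLM_apply] at h3
    have h4 : Phi.symm (gradient f (x t)) = gmap f (z t) := by
      have := grad_transfer (f := f) (hdiffU _ (hXU t ht))
      rw [hzdef]; exact this
    rwa [h4] at h3
  -- continuity machinery
  have hxm : Continuous (fun s : ℝ => x (max s 0)) := by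
    rw [continuous_iff_continuousAt]
    intro s
    have h1 : ContinuousAt x (max s 0) := (hxd _ (le_max_right s 0)).continuousAt
    have h2 : ContinuousAt (fun s : ℝ => max s 0) s :=
      (continuous_id.max continuous_const).continuousAt
    exact ContinuousAt.comp (f := fun u : ℝ => max u 0) (x := s) h1 h2
  have hzcont : Continuous (fun s => z (max s 0)) := Phi.symm.continuous.comp hxm
  set φ : ℝ → ℂ := fun s => gmap f (z (max s 0)) / z (max s 0) with hφdef
  have hφcont : Continuous φ := by
    rw [continuous_iff_continuousAt]; intro s
    have hU' : Phi (z (max s 0)) ∈ U := by rw [hzx]; exact hXU _ (le_max_right _ _)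
    have h1 : ContinuousAt (gmap f) (z (max s 0)) := (gmap_analyticAt hf hU hU').continuousAt
    have h2 : ContinuousAt (fun s : ℝ => z (max s 0)) s := hzcont.continuousAt
    have hnum : ContinuousAt (fun s : ℝ => gmap f (z (max s 0))) s :=
      ContinuousAt.comp (f := fun u : ℝ => z (max u 0)) (x := s) h1 h2
    exact hnum.div hzcont.continuousAt (hzne _ (le_max_right _ _))
  set w : ℝ → ℂ := fun t => ∫ s in (0:ℝ)..t, φ s with hwdef
  have hwd : ∀ t, HasDerivAt w (φ t) t := fun t => ftc_cont hφcont t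
  have hwcont : Continuous w := continuous_iff_continuousAt.mpr fun t => (hwd t).continuousAt
  have hφeq : ∀ t, 0 ≤ t → φ t = gmap f (z t) / z t := by
    intro t ht
    rw [hφdef]; simp only [max_eq_left ht]
  -- z t = z 0 * exp (w t)
  have hzw : ∀ t, 0 ≤ t → z t = z 0 * Complex.exp (w t) := by
    intro t ht
    have hK : ∀ u, 0 ≤ u → u ≤ t → HasDerivAt (fun s => z s * Complex.exp (-w s)) 0 u := by
      intro u hu hut
      have h1 : HasDerivAt (fun s => Complex.exp (-w s))
          (Complex.exp (-w u) * -φ u) u := ((hwd u).neg).cexp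
      have h2 := (hzd u hu).mul h1
      have h3 : gmap f (z u) * Complex.exp (-w u) + z u * (Complex.exp (-w u) * -φ u) = 0 := by
        rw [hφeq u hu]
        field_simp [hzne u hu]
        ring
      rwa [h3] at h2
    have hK0 := const_of_deriv_zero ht hK
    have hw0 : w 0 = 0 := intervalIntegral.integral_same
    simp only [hw0, neg_zero, Complex.exp_zero, mul_one] at hK0
    have := congrArg (fun v => v * Complex.exp (w t)) hK0
    rwa [mul_assoc, ← Complex.exp_add, neg_add_cancel, Complex.exp_zero, mul_one] at this
  -- the angle function
  set θ : ℝ → ℝ := fun t => Complex.arg (z 0) + (w t).im with hθdef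
  have hθcont : Continuous θ := continuous_const.add (Complex.continuous_im.comp hwcont)
  have hpolar : ∀ t, 0 ≤ t → z t = (‖z t‖ : ℂ) * Complex.exp ((θ t : ℂ) * Complex.I) := by
    intro t ht
    have h1 : z t = z 0 * Complex.exp (w t) := hzw t ht
    have habs : ‖z t‖ = ‖z 0‖ * Real.exp ((w t).re) := by
      rw [h1, norm_mul, Complex.norm_exp]
    have hz0 : z 0 = (‖z 0‖:ℂ) * Complex.exp ((Complex.arg (z 0) : ℂ) * Complex.I) := by
      exact (Complex.norm_mul_exp_arg_mul_I (z 0)).symm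
    have e0 : Complex.exp (w t)
        = Complex.exp (((w t).re : ℂ)) * Complex.exp (((w t).im:ℂ) * Complex.I) := by
      rw [← Complex.exp_add]
      congr 1
      exact (Complex.re_add_im (w t)).symm
    have e2 : Complex.exp ((θ t:ℂ) * Complex.I)
        = Complex.exp ((Complex.arg (z 0):ℂ) * Complex.I)
          * Complex.exp (((w t).im:ℂ) * Complex.I) := by
      rw [← Complex.exp_add, hθdef]
      congr 1
      push_cast
      ring
    calc z t = z 0 * Complex.exp (w t) := h1
      _ = (‖z 0‖:ℂ) * Complex.exp ((Complex.arg (z 0):ℂ) * Complex.I)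
          * (Complex.exp (((w t).re : ℂ)) * Complex.exp (((w t).im:ℂ) * Complex.I)) := by
            rw [← e0, ← hz0]
      _ = ((‖z 0‖ * Real.exp ((w t).re) : ℝ) : ℂ) * Complex.exp ((θ t:ℂ) * Complex.I) := by
            rw [e2, Complex.ofReal_mul, Complex.ofReal_exp]; ring
      _ = (‖z t‖:ℂ) * Complex.exp ((θ t:ℂ) * Complex.I) := by rw [← habs]
  -- coordinates
  have hcoords : ∀ t, 0 ≤ t →
      x t 0 = ‖x t‖ * Real.cos (θ t) ∧ x t 1 = ‖x t‖ * Real.sin (θ t) := by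
    intro t ht
    have h1 : x t 0 = (z t).re := by rw [← hzx t, Phi_coord0]
    have h2 : x t 1 = (z t).im := by rw [← hzx t, Phi_coord1]
    constructor
    · rw [h1, hpolar t ht, Complex.re_ofReal_mul, Complex.exp_ofReal_mul_I_re, hznorm]
    · rw [h2, hpolar t ht, Complex.im_ofReal_mul, Complex.exp_ofReal_mul_I_im, hznorm]
  -- derivative of θ
  set q : ℝ → ℝ := fun t => (φ t).im with hqdef
  have hθd : ∀ t, HasDerivAt θ (q t) t := by
    intro t
    have h1 := (Complex.imCLM.hasFDerivAt.comp_hasDerivAt t (hwd t)).const_add (Complex.arg (z 0))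
    have h2 : HasDerivAt (fun s => Complex.arg (z 0) + Complex.imCLM (w s)) (Complex.imCLM (φ t)) t := h1
    refine h2.congr_of_eventuallyEq ?_
    filter_upwards with s
    rw [hθdef]
    rfl
  have hq_eq : ∀ t, 0 ≤ t → Gf f (z t) = q t * ‖z t‖^2 := by
    intro t ht
    have hz2 : ‖z t‖^2 ≠ 0 := pow_ne_zero _ (norm_ne_zero_iff.mpr (hzne t ht))
    have h1 : q t = ((starRingEnd ℂ) (z t) * gmap f (z t)).im / ‖z t‖^2 := by
      rw [hqdef]; simp only
      rw [hφeq t ht, L_div_im, L_normsq]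
    have h2 : Gf f (z t) = ((starRingEnd ℂ) (z t) * gmap f (z t)).im := rfl
    rw [h2, h1, div_mul_cancel₀ _ hz2]
  -- choose power series ball
  have h0U' : Phi (0:ℂ) ∈ U := by rw [map_zero]; exact h0U
  obtain ⟨P, hPat⟩ := Gf_analyticAt hf hU h0U'
  obtain ⟨r₀, hPball⟩ := hPat
  obtain ⟨δ₁, hδ₁pos, hδ₁⟩ := Metric.isOpen_iff.mp (hU.preimage Phi.continuous) 0 h0U'
  have hmin_pos : (0:ℝ≥0∞) < min (ENNReal.ofReal δ₁) r₀ := by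
    refine lt_min ?_ hPball.r_pos
    simpa using hδ₁pos
  obtain ⟨η, hη0, hηlt⟩ := ENNReal.lt_iff_exists_nnreal_btwn.mp hmin_pos
  have hη0' : 0 < η := by exact_mod_cast hη0
  have hηpos : 0 < (η:ℝ) := hη0'
  have hηr₀ : (η:ℝ≥0∞) < r₀ := lt_of_lt_of_le hηlt (min_le_right _ _)
  have hηδ₁ : (η:ℝ) < δ₁ := by
    have h := lt_of_lt_of_le hηlt (min_le_left _ _)
    rw [← ENNReal.ofReal_coe_nnreal] at h
    exact (ENNReal.ofReal_lt_ofReal_iff hδ₁pos).mp h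
  have hPb : HasFPowerSeriesOnBall (Gf f) P 0 (η:ℝ≥0∞) := hPball.mono hη0 hηr₀.le
  have hrad : (η:ℝ≥0∞) < P.radius := lt_of_lt_of_le hηr₀ hPball.r_le
  have hballU : ∀ ζ:ℂ, ‖ζ‖ < (η:ℝ) → Phi ζ ∈ U := by
    intro ζ hζ
    have : ζ ∈ Metric.ball (0:ℂ) δ₁ := by
      rw [Metric.mem_ball, dist_zero_right]; exact lt_trans hζ hηδ₁
    exact hδ₁ this
  have hmeans := mean_coeffs_zero hU hf hηpos hPb hrad hballU
  have hPsum := P.summable_norm_mul_pow hrad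
  have hsumray : ∀ ω:ℂ, ‖ω‖ = 1 → Summable fun j => |(P j fun _ => ω)| * (η:ℝ)^j := by
    intro ω hω
    refine Summable.of_nonneg_of_le (fun j => by positivity) (fun j => ?_) hPsum
    exact mul_le_mul_of_nonneg_right (coeff_bound P j hω) (by positivity)
  -- trajectory enters small balls
  have hsmall : ∀ δ : ℝ, 0 < δ → ∃ T : ℝ, 0 ≤ T ∧ ∀ t, T ≤ t → ‖x t‖ < δ := by
    intro δ hδ
    have h1 := Metric.tendsto_nhds.mp hlim δ hδ
    rw [eventually_atTop] at h1
    obtain ⟨T', hT'⟩ := h1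
    refine ⟨max T' 0, le_max_right _ _, fun t ht => ?_⟩
    have := hT' t (le_trans (le_max_left _ _) ht)
    rwa [dist_zero_right] at this
  -- sign information on rays (upper)
  have hsign_upper : ¬BddAbove (θ '' Ici 0) → ∀ ω : ℂ, ‖ω‖ = 1 → ∀ δ : ℝ, 0 < δ →
      ∃ r : ℝ, 0 < r ∧ r < δ ∧ 0 ≤ ∑' j, (P j fun _ => ω) * r ^ j := by
    intro hub ω hω δ hδ
    obtain ⟨α, hα0, hα2, hαω⟩ := L_unit_exp ω hω
    have hδ' : 0 < min δ (η:ℝ) := lt_min hδ hηpos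
    obtain ⟨T, hT0, hT⟩ := hsmall _ hδ'
    obtain ⟨t, k, htpos, hPt, hθt, hqt⟩ := hit (fun t _ => hθd t) hub hT0 hT α
    have htnn : (0:ℝ) ≤ t := htpos.le
    have hrpos : 0 < ‖z t‖ := norm_pos_iff.mpr (hzne t htnn)
    have hrδ' : ‖z t‖ < min δ (η:ℝ) := by rw [hznorm]; exact hPt
    have hrη : ‖z t‖ < (η:ℝ) := lt_of_lt_of_le hrδ' (min_le_right _ _)
    refine ⟨‖z t‖, hrpos, lt_of_lt_of_le hrδ' (min_le_left _ _), ?_⟩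
    rw [ray_sum hPb hω hrpos hrη]
    have hzt : ((‖z t‖:ℝ):ℂ) * ω = z t := by
      rw [hαω, ← L_exp_per_add α k, ← hθt]
      exact (hpolar t htnn).symm
    rw [hzt, hq_eq t htnn]
    exact mul_nonneg hqt (by positivity)
  -- sign information on rays (lower)
  have hsign_lower : ¬BddBelow (θ '' Ici 0) → ∀ ω : ℂ, ‖ω‖ = 1 → ∀ δ : ℝ, 0 < δ →
      ∃ r : ℝ, 0 < r ∧ r < δ ∧ 0 ≤ ∑' j, (-(P j fun _ => ω)) * r ^ j := by
    intro hlb ω hω δ hδ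
    have hub' : ¬BddAbove ((fun t => -θ t) '' Ici 0) := by
      intro hBdd
      apply hlb
      obtain ⟨M, hM⟩ := hBdd
      refine ⟨-M, ?_⟩
      rintro y ⟨t, ht, rfl⟩
      have h1 : -θ t ≤ M := hM ⟨t, ht, rfl⟩
      linarith
    obtain ⟨α, hα0, hα2, hαω⟩ := L_unit_exp ω hω
    have hδ' : 0 < min δ (η:ℝ) := lt_min hδ hηpos
    obtain ⟨T, hT0, hT⟩ := hsmall _ hδ'
    obtain ⟨t, k, htpos, hPt, hθt, hqt⟩ :=
      hit (θ := fun t => -θ t) (q := fun t => -q t) (fun t _ => (hθd t).neg) hub' hT0 hT (-α)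
    have htnn : (0:ℝ) ≤ t := htpos.le
    have hθt2 : -θ t = -α + 2*π*(k:ℕ) := hθt
    have hθt' : θ t = α - 2*π*(k:ℕ) := by linarith
    have hqt2 : -q t ≥ 0 := hqt
    have hrpos : 0 < ‖z t‖ := norm_pos_iff.mpr (hzne t htnn)
    have hrδ' : ‖z t‖ < min δ (η:ℝ) := by rw [hznorm]; exact hPt
    have hrη : ‖z t‖ < (η:ℝ) := lt_of_lt_of_le hrδ' (min_le_right _ _)
    refine ⟨‖z t‖, hrpos, lt_of_lt_of_le hrδ' (min_le_left _ _), ?_⟩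
    have hnegsum : (∑' j, (-(P j fun _ => ω)) * ‖z t‖ ^ j)
        = -∑' j, (P j fun _ => ω) * ‖z t‖ ^ j := by
      rw [← tsum_neg]
      exact tsum_congr fun j => by ring
    rw [hnegsum, ray_sum hPb hω hrpos hrη]
    have hzt : ((‖z t‖:ℝ):ℂ) * ω = z t := by
      rw [hαω, ← L_exp_per_sub α k, ← hθt']
      exact (hpolar t htnn).symm
    rw [hzt, hq_eq t htnn]
    have hq0 : q t ≤ 0 := by linarith
    nlinarith [pow_nonneg (norm_nonneg (z t)) 2]
  -- main case split
  by_cases hA : ∀ j : ℕ, ∀ ωa : ℂ, ‖ωa‖ = 1 → (P j fun _ => ωa) = 0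
  · -- all circle coefficients vanish: Gf ≡ 0 near 0, θ is eventually constant
    have hG0ball : ∀ ζ:ℂ, ‖ζ‖ < (η:ℝ) → Gf f ζ = 0 := by
      intro ζ hζ
      rcases eq_or_ne ζ 0 with rfl | hζ0
      · show ((starRingEnd ℂ) 0 * gmap f 0).im = 0
        simp
      · have hrpos : 0 < ‖ζ‖ := norm_pos_iff.mpr hζ0
        set ω : ℂ := ((‖ζ‖:ℝ):ℂ)⁻¹ * ζ with hω
        have hωnorm : ‖ω‖ = 1 := by
          rw [hω, norm_mul, norm_inv, Complex.norm_real, Real.norm_eq_abs, abs_of_pos hrpos]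
          exact inv_mul_cancel₀ hrpos.ne'
        have hζeq : ((‖ζ‖:ℝ):ℂ) * ω = ζ := by
          rw [hω, ← mul_assoc, mul_inv_cancel₀ (Complex.ofReal_ne_zero.mpr hrpos.ne'), one_mul]
        have hray := ray_sum hPb hωnorm hrpos hζ
        rw [hζeq] at hray
        rw [← hray]
        have hz0 : ∀ j:ℕ, (P j fun _ => ω) * ‖ζ‖ ^ j = 0 := fun j => by
          rw [hA j ω hωnorm, zero_mul]
        rw [tsum_congr hz0, tsum_zero]
    obtain ⟨T, hT0, hT⟩ := hsmall _ hηpos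
    have hconst : ∀ t, T ≤ t → θ t = θ T := by
      intro t ht
      refine const_of_deriv_zero ht ?_
      intro u hTu hut
      have hunn : 0 ≤ u := le_trans hT0 hTu
      have h2 : Gf f (z u) = 0 := hG0ball _ (by rw [hznorm]; exact hT u hTu)
      have h5 : ‖z u‖^2 ≠ 0 := pow_ne_zero _ (norm_ne_zero_iff.mpr (hzne u hunn))
      have h3 : q u = 0 := by
        have h4 := hq_eq u hunn
        rw [h2] at h4
        rcases mul_eq_zero.mp h4.symm with h | h
        · exact h
        · exact absurd h h5
      have h6 := hθd u
      rwa [h3] at h6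
    obtain ⟨B, hB⟩ := (isCompact_Icc (α := ℝ) (a := 0) (b := T)).exists_bound_of_continuousOn
      hθcont.continuousOn
    refine ⟨θ, hθcont.continuousOn, hcoords, max B |θ T|, ?_⟩
    intro t ht
    rcases le_total t T with h | h
    · have := hB t ⟨ht, h⟩
      rw [Real.norm_eq_abs] at this
      exact le_trans this (le_max_left _ _)
    · rw [hconst t h]
      exact le_max_right _ _
  · push_neg at hA
    have hA' : ∃ j : ℕ, ∃ ωa : ℂ, ‖ωa‖ = 1 ∧ (P j fun _ => ωa) ≠ 0 := hA
    set n := Nat.find hA' with hn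
    obtain ⟨ω₀, hω₀, hω₀ne⟩ := Nat.find_spec hA'
    have hminlt : ∀ i, i < n → ∀ ωa:ℂ, ‖ωa‖ = 1 → (P i fun _ => ωa) = 0 := by
      intro i hi ωa hωa
      by_contra h
      exact Nat.find_min hA' hi ⟨ωa, hωa, h⟩
    obtain ⟨α₀, hα₀0, hα₀2, hα₀⟩ := L_unit_exp ω₀ hω₀
    have h2πpos : (0:ℝ) < 2*π := by linarith [Real.pi_pos]
    have hintzero : (∫ β in (0:ℝ)..(2*π), (P n fun _ => Complex.exp ((β:ℂ)*Complex.I))) = 0 := by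
      rw [intervalIntegral.integral_of_le h2πpos.le]
      exact hmeans n
    have hhcont : Continuous (fun β : ℝ => (P n fun _ => Complex.exp ((β:ℂ)*Complex.I))) := by
      apply (P n).coe_continuous.comp
      exact continuous_pi fun i =>
        Complex.continuous_exp.comp (Complex.continuous_ofReal.mul continuous_const)
    have hexpunit : ∀ β : ℝ, ‖Complex.exp ((β:ℂ)*Complex.I)‖ = 1 := fun β =>
      Complex.norm_exp_ofReal_mul_I β
    have hBddA : BddAbove (θ '' Ici 0) := by
      by_contra hub
      have hposc : ∀ ωa:ℂ, ‖ωa‖=1 → 0 ≤ (P n fun _ => ωa) := by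
        intro ωa hωa
        exact first_coeff_nonneg _ (η:ℝ) hηpos (hsumray ωa hωa) n
          (fun j hj => hminlt j hj ωa hωa) (hsign_upper hub ωa hωa)
      have hpos₀ : 0 < (P n fun _ => Complex.exp ((α₀:ℂ)*Complex.I)) := by
        rw [← hα₀]
        exact lt_of_le_of_ne (hposc ω₀ hω₀) (Ne.symm hω₀ne)
      have hI := intervalIntegral.integral_pos h2πpos
        hhcont.continuousOn (fun β _ => hposc _ (hexpunit β)) ⟨α₀, ⟨hα₀0, hα₀2⟩, hpos₀⟩
      rw [hintzero] at hI
      exact lt_irrefl 0 hI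
    have hBddB : BddBelow (θ '' Ici 0) := by
      by_contra hlb
      have hnegc : ∀ ωa:ℂ, ‖ωa‖=1 → (P n fun _ => ωa) ≤ 0 := by
        intro ωa hωa
        have h1 : Summable fun j => |-(P j fun _ => ωa)| * (η:ℝ)^j := by
          simpa only [abs_neg] using hsumray ωa hωa
        have h2 := first_coeff_nonneg (fun j => -(P j fun _ => ωa)) (η:ℝ) hηpos h1 n
          (fun j hj => by show -(P j fun _ => ωa) = 0; rw [hminlt j hj ωa hωa, neg_zero])
          (hsign_lower hlb ωa hωa)
        have h2' : 0 ≤ -(P n fun _ => ωa) := h2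
        linarith
      have hneg₀ : 0 < -(P n fun _ => Complex.exp ((α₀:ℂ)*Complex.I)) := by
        rw [← hα₀]
        rcases lt_or_eq_of_le (hnegc ω₀ hω₀) with h | h
        · linarith
        · exact absurd h hω₀ne
      have hI := intervalIntegral.integral_pos h2πpos
        (hhcont.neg.continuousOn) (fun β _ => by
          have := hnegc _ (hexpunit β)
          show (0:ℝ) ≤ -(P n fun _ => Complex.exp ((β:ℂ)*Complex.I))
          linarith)
        ⟨α₀, ⟨hα₀0, hα₀2⟩, hneg₀⟩
      simp only [Pi.neg_apply] at hI
      rw [intervalIntegral.integral_neg, hintzero, neg_zero] at hI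
      exact lt_irrefl 0 hI
    obtain ⟨M₁, hM₁⟩ := hBddA
    obtain ⟨M₂, hM₂⟩ := hBddB
    refine ⟨θ, hθcont.continuousOn, hcoords, max M₁ (-M₂), fun t ht => ?_⟩
    have h1 : θ t ≤ M₁ := hM₁ ⟨t, ht, rfl⟩
    have h2 : M₂ ≤ θ t := hM₂ ⟨t, ht, rfl⟩
    rw [abs_le]
    constructor
    · have := le_max_right M₁ (-M₂)
      linarith
    · exact le_trans h1 (le_max_left _ _)

end NoSpiral

/-- **Non-spiraling in dimension 2.** Let `f` be real analytic on a neighborhood of `0` in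
`ℝ²` and let `x(t)`, `t ∈ [0, ∞)`, be a trajectory of `∇f` with `x(t) → 0` as `t → ∞` and
`x(t) ≠ 0` for all `t ≥ 0`. Then `x(t)` does not spiral around the origin: there is a
continuous angle function `θ` on `[0, ∞)` with
`x(t) = |x(t)|·(cos θ(t), sin θ(t))`, and `θ` is bounded on `[0, ∞)`. -/
theorem no_spiraling_dim_two
    (U : Set (EuclideanSpace ℝ (Fin 2))) (hU : IsOpen U) (h0U : (0 : EuclideanSpace ℝ (Fin 2)) ∈ U)
    (f : EuclideanSpace ℝ (Fin 2) → ℝ) (hf : AnalyticOnNhd ℝ f U)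
    (x : ℝ → EuclideanSpace ℝ (Fin 2))
    (hx : ∀ t : ℝ, 0 ≤ t → x t ∈ U ∧ HasDerivAt x (gradient f (x t)) t)
    (hne : ∀ t : ℝ, 0 ≤ t → x t ≠ 0)
    (hlim : Tendsto x atTop (𝓝 0)) :
    ∃ θ : ℝ → ℝ, ContinuousOn θ (Set.Ici 0) ∧
      (∀ t : ℝ, 0 ≤ t →
        x t 0 = ‖x t‖ * Real.cos (θ t) ∧ x t 1 = ‖x t‖ * Real.sin (θ t)) ∧
      ∃ C : ℝ, ∀ t : ℝ, 0 ≤ t → |θ t| ≤ C :=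
  NoSpiral.main U hU h0U f hf x hx hne hlim
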